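/- Let M be a finite von Neumann algebra with trace τ (take M = Matrix n n ℂ with normalized trace) and N ⊆ M a unital *-subalgebra with trace-preserving conditional expectation E. If E(x) ≥ λ·x for all x ≥ 0 with λ > 0, and p is a projection in M with E(p) ≤ c·p for some c > 0, then p ∈ N. -/

import Mathlib

open Matrix Complex ComplexOrder

variable {n : Type*} [Fintype n] [DecidableEq n]

private lemma aeval_diagonal' (d : n → ℂ) (r : Polynomial ℂ) :
    Polynomial.aeval (diagonal d : Matrix n n ℂ) r = diagonal (fun i => r.eval (d i)) := by
  have h1 := Polynomial.aeval_algHom_apply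
    (Matrix.diagonalAlgHom ℂ : (n → ℂ) →ₐ[ℂ] Matrix n n ℂ) d r
  rw [Matrix.diagonalAlgHom_apply] at h1
  rw [h1, Matrix.diagonalAlgHom_apply]
  refine congrArg diagonal (funext fun i => ?_)
  have h2 := Polynomial.aeval_algHom_apply (Pi.evalAlgHom ℂ (fun _ : n => ℂ) i) d r
  simp only [Pi.evalAlgHom_apply] at h2
  rw [← h2, Polynomial.aeval_def]
  rfl

private lemma conj_pow' (U D : Matrix n n ℂ) (hU : star U * U = 1) (k : ℕ) :
    (U * D * star U) ^ k = U * D ^ k * star U := by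
  induction k with
  | zero =>
      simp only [pow_zero, mul_one]
      exact (mul_eq_one_comm.mp hU).symm
  | succ k ih =>
      rw [pow_succ, ih]
      have h2 : U * D ^ k * star U * (U * D * star U)
          = U * D ^ k * ((star U * U) * (D * star U)) := by
        simp only [Matrix.mul_assoc]
      rw [h2, hU, one_mul, pow_succ]
      simp only [Matrix.mul_assoc]

private lemma aeval_conj' (U D : Matrix n n ℂ) (hU : star U * U = 1) (r : Polynomial ℂ) :
    Polynomial.aeval (U * D * star U) r = U * Polynomial.aeval D r * star U := by
  induction r using Polynomial.induction_on' with
  | add p q hp hq => rw [map_add, map_add, hp, hq, Matrix.mul_add, Matrix.add_mul]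
  | monomial k a =>
      rw [Polynomial.aeval_monomial, Polynomial.aeval_monomial, conj_pow' U D hU k,
        ← Algebra.smul_def, ← Algebra.smul_def, Matrix.mul_smul, Matrix.smul_mul]

/-- If a polynomial vanishes on (the complexifications of) all eigenvalues of a Hermitian
matrix, then its evaluation at the matrix is zero. -/
private lemma aeval_eq_zero_of_vanish (x : Matrix n n ℂ) (hx : x.IsHermitian)
    (r : Polynomial ℂ) (h : ∀ i, r.eval ((hx.eigenvalues i : ℝ) : ℂ) = 0) :
    Polynomial.aeval x r = 0 := by
  have hU : star (hx.eigenvectorUnitary : Matrix n n ℂ) * (hx.eigenvectorUnitary : Matrix n n ℂ)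
      = 1 := hx.eigenvectorUnitary.2.1
  have hsp := hx.spectral_theorem
  calc Polynomial.aeval x r
      = Polynomial.aeval ((hx.eigenvectorUnitary : Matrix n n ℂ)
          * diagonal (RCLike.ofReal ∘ hx.eigenvalues)
          * star (hx.eigenvectorUnitary : Matrix n n ℂ)) r := by
            exact congrArg (fun m => Polynomial.aeval m r) hsp
    _ = (hx.eigenvectorUnitary : Matrix n n ℂ)
          * Polynomial.aeval (diagonal (RCLike.ofReal ∘ hx.eigenvalues) : Matrix n n ℂ) r
          * star (hx.eigenvectorUnitary : Matrix n n ℂ) := aeval_conj' _ _ hU r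
    _ = 0 := by
          rw [aeval_diagonal']
          have hz : (fun i => r.eval ((RCLike.ofReal ∘ hx.eigenvalues) i)) = fun _ => (0 : ℂ) :=
            funext fun i => h i
          rw [hz, diagonal_zero, Matrix.mul_zero, Matrix.zero_mul]

/-- A PSD matrix whose negation is PSD is zero. -/
private lemma psd_neg_eq_zero {A : Matrix n n ℂ} (h1 : A.PosSemidef) (h2 : (-A).PosSemidef) :
    A = 0 := by
  have hq : ∀ v : n → ℂ, star v ⬝ᵥ A *ᵥ v = 0 := by
    intro v
    have l1 := h1.dotProduct_mulVec_nonneg v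
    have l2 := h2.dotProduct_mulVec_nonneg v
    rw [Matrix.neg_mulVec, dotProduct_neg, le_neg, neg_zero] at l2
    exact le_antisymm l2 l1
  obtain ⟨s, hherm, hss⟩ : ∃ s : Matrix n n ℂ, sᴴ = s ∧ sᴴ * s = A := by
    open scoped MatrixOrder in
    refine ⟨CFC.sqrt A, IsSelfAdjoint.of_nonneg (CFC.sqrt_nonneg A), ?_⟩
    show star (CFC.sqrt A) * CFC.sqrt A = A
    rw [(IsSelfAdjoint.of_nonneg (CFC.sqrt_nonneg A)).star_eq]
    exact CFC.sqrt_mul_sqrt_self A h1.nonneg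
  have hv : ∀ v : n → ℂ, s *ᵥ v = 0 := by
    intro v
    have hz : star (s *ᵥ v) ⬝ᵥ (s *ᵥ v) = 0 := by
      rw [star_mulVec, ← Matrix.dotProduct_mulVec, Matrix.mulVec_mulVec, hss]
      exact hq v
    rwa [dotProduct_star_self_eq_zero] at hz
  have hs0 : s = 0 := by
    ext i j
    simpa using congrFun (hv (Pi.single j 1)) i
  rw [← hss, hs0]
  simp

/-- If `E` is the trace-preserving conditional expectation onto a unital *-subalgebra `S`
of `Matrix n n ℂ` satisfying the Pimsner–Popa inequality `E(x) ≥ λ x` for PSD `x`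
(with `λ > 0`), then any projection `p` with `E(p) ≤ c p` for some `c > 0` lies in `S`. -/
theorem stmt17 (S : StarSubalgebra ℂ (Matrix n n ℂ)) (E : Module.End ℂ (Matrix n n ℂ))
    (hrange : ∀ x, E x ∈ S) (hfix : ∀ x ∈ S, E x = x)
    (hEpos : ∀ x : Matrix n n ℂ, x.PosSemidef → (E x).PosSemidef)
    (htr : ∀ x, (E x).trace = x.trace)
    (lam : ℝ) (hlam : 0 < lam)
    (hPP : ∀ y : Matrix n n ℂ, y.PosSemidef → (E y - (lam : ℂ) • y).PosSemidef)
    (p : Matrix n n ℂ) (hp : p.IsHermitian) (hpp : p * p = p)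
    (c : ℝ) (hc : 0 < c) (hle : ((c : ℂ) • p - E p).PosSemidef) :
    p ∈ S := by
  classical
  have hpsd : p.PosSemidef := by
    have hq : p = pᴴ * p := by rw [hp.eq, hpp]
    rw [hq]
    exact Matrix.posSemidef_conjTranspose_mul_self p
  obtain ⟨x, hxdef⟩ : ∃ x, x = E p := ⟨E p, rfl⟩
  rw [← hxdef] at hle
  have hxS : x ∈ S := hxdef ▸ hrange p
  have hxpsd : x.PosSemidef := hxdef ▸ hEpos p hpsd
  have hxh : x.IsHermitian := hxpsd.isHermitian
  have hPPp : (x - (lam : ℂ) • p).PosSemidef := by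
    have := hPP p hpsd
    rwa [← hxdef] at this
  -- Step 1 : x * (1 - p) = 0, hence x * p = x and p * x = x
  have hf : (1 - p : Matrix n n ℂ)ᴴ = 1 - p := by
    rw [conjTranspose_sub, conjTranspose_one, hp.eq]
  have hfp : (1 - p : Matrix n n ℂ) * p = 0 := by
    rw [Matrix.sub_mul, Matrix.one_mul, hpp, sub_self]
  have hfxf0 : (1 - p) * x * (1 - p) = 0 := by
    have hA : ((1 - p)ᴴ * ((c : ℂ) • p - x) * (1 - p)).PosSemidef :=
      hle.conjTranspose_mul_mul_same (1 - p)
    have hB : ((1 - p) * x * (1 - p)).PosSemidef := by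
      have := hxpsd.conjTranspose_mul_mul_same (1 - p)
      rwa [hf] at this
    have hc0 : (1 - p : Matrix n n ℂ) * ((c : ℂ) • p) = 0 := by
      rw [Matrix.mul_smul, hfp, smul_zero]
    have h1 : (1 - p) * ((c : ℂ) • p - x) = -((1 - p) * x) := by
      rw [Matrix.mul_sub, hc0, zero_sub]
    have hcomp : (1 - p)ᴴ * ((c : ℂ) • p - x) * (1 - p) = -((1 - p) * x * (1 - p)) := by
      rw [hf, h1, Matrix.neg_mul]
    apply psd_neg_eq_zero hB
    rw [← hcomp]
    exact hA
  have hxf : x * (1 - p) = 0 := by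
    obtain ⟨s, hherm, hss⟩ : ∃ s : Matrix n n ℂ, sᴴ = s ∧ s * s = x := by
      open scoped MatrixOrder in
      exact ⟨CFC.sqrt x, IsSelfAdjoint.of_nonneg (CFC.sqrt_nonneg x),
        CFC.sqrt_mul_sqrt_self x hxpsd.nonneg⟩
    have h1 : (s * (1 - p))ᴴ * (s * (1 - p)) = 0 := by
      rw [conjTranspose_mul, hherm, hf]
      calc (1 - p) * s * (s * (1 - p)) = (1 - p) * (s * s) * (1 - p) := by
            simp only [Matrix.mul_assoc]
        _ = 0 := by rw [hss]; exact hfxf0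
    have h2 : s * (1 - p) = 0 := Matrix.conjTranspose_mul_self_eq_zero.mp h1
    calc x * (1 - p) = s * (s * (1 - p)) := by rw [← Matrix.mul_assoc, hss]
      _ = 0 := by rw [h2, Matrix.mul_zero]
  have hxp : x * p = x := by
    have hz := hxf
    rw [Matrix.mul_sub, Matrix.mul_one, sub_eq_zero] at hz
    exact hz.symm
  have hpx : p * x = x := by
    have hz : (x * p)ᴴ = p * x := by rw [conjTranspose_mul, hp.eq, hxh.eq]
    rw [← hz, hxp, hxh.eq]
  -- Step 2 : interpolation polynomial q with q(0)=0, q(μ)=1 for μ ≠ 0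
  set vals : ℂ → ℂ := fun z => if z = 0 then 0 else 1 with hvals
  set nodes : Finset ℂ :=
    insert 0 (Finset.univ.image fun i => ((hxh.eigenvalues i : ℝ) : ℂ)) with hnodes
  obtain ⟨q, hqdef⟩ : ∃ q, q = Lagrange.interpolate nodes id vals := ⟨_, rfl⟩
  have hinj : Set.InjOn id (nodes : Set ℂ) := Function.injective_id.injOn
  have hq0 : q.eval 0 = 0 := by
    have h0 : (0 : ℂ) ∈ nodes := Finset.mem_insert_self _ _
    have hz := Lagrange.eval_interpolate_at_node vals hinj h0
    rw [hqdef]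
    simpa [hvals] using hz
  have hqmu : ∀ i, q.eval ((hxh.eigenvalues i : ℝ) : ℂ)
      = vals ((hxh.eigenvalues i : ℝ) : ℂ) := by
    intro i
    have hm : ((hxh.eigenvalues i : ℝ) : ℂ) ∈ nodes :=
      Finset.mem_insert_of_mem (Finset.mem_image_of_mem _ (Finset.mem_univ i))
    have hz := Lagrange.eval_interpolate_at_node vals hinj hm
    rw [hqdef]
    simpa using hz
  obtain ⟨y, hydef⟩ : ∃ y, y = Polynomial.aeval x q := ⟨_, rfl⟩
  -- y ∈ S
  have hyS : y ∈ S := by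
    have h1 : Polynomial.aeval x q ∈ Algebra.adjoin ℂ ({x} : Set (Matrix n n ℂ)) :=
      Polynomial.aeval_mem_adjoin_singleton ℂ x
    have h2 : Algebra.adjoin ℂ ({x} : Set (Matrix n n ℂ)) ≤ S.toSubalgebra := by
      rw [Algebra.adjoin_le_iff]
      intro z hz
      rw [Set.mem_singleton_iff] at hz
      rw [hz]
      exact hxS
    rw [hydef]
    exact h2 h1
  -- x * y = x
  have hxy : x * y = x := by
    have hr : Polynomial.aeval x (Polynomial.X * q - Polynomial.X) = 0 := by
      apply aeval_eq_zero_of_vanish x hxh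
      intro i
      rw [Polynomial.eval_sub, Polynomial.eval_mul, Polynomial.eval_X, hqmu i]
      by_cases h : ((hxh.eigenvalues i : ℝ) : ℂ) = 0
      · rw [h]; simp
      · rw [hvals]; simp only [if_neg h]; ring
    rw [map_sub, _root_.map_mul, Polynomial.aeval_X] at hr
    rw [sub_eq_zero] at hr
    rw [hydef]
    exact hr
  -- p * y = y  (using q = X * h and p * x = x)
  have hpy : p * y = y := by
    have hXdvd : Polynomial.X ∣ q := by
      rw [Polynomial.X_dvd_iff, Polynomial.coeff_zero_eq_eval_zero]
      exact hq0
    obtain ⟨h', hh'⟩ := hXdvd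
    rw [hydef, hh', _root_.map_mul, Polynomial.aeval_X, ← Matrix.mul_assoc, hpx]
  -- Step 3 : e := p - y satisfies x * e = 0, hence p * e = 0, so p = y
  obtain ⟨e, hedef⟩ : ∃ e, e = p - y := ⟨_, rfl⟩
  have hxe : x * e = 0 := by
    rw [hedef, Matrix.mul_sub, hxp, hxy, sub_self]
  have hexe : eᴴ * x * e = 0 := by
    rw [Matrix.mul_assoc, hxe, Matrix.mul_zero]
  have hpe : p * e = 0 := by
    have hA : (eᴴ * (x - (lam : ℂ) • p) * e).PosSemidef :=
      hPPp.conjTranspose_mul_mul_same e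
    have hC : ((p * e)ᴴ * (p * e)).PosSemidef := Matrix.posSemidef_conjTranspose_mul_self _
    have hCe : eᴴ * ((lam : ℂ) • p) * e = (lam : ℂ) • ((p * e)ᴴ * (p * e)) := by
      rw [conjTranspose_mul, hp.eq, Matrix.mul_smul, Matrix.smul_mul]
      congr 1
      rw [Matrix.mul_assoc, Matrix.mul_assoc, ← Matrix.mul_assoc p p e, hpp]
    have hsum : eᴴ * (x - (lam : ℂ) • p) * e + (lam : ℂ) • ((p * e)ᴴ * (p * e)) = 0 := by
      have hsplit : eᴴ * (x - (lam : ℂ) • p) = eᴴ * x - eᴴ * ((lam : ℂ) • p) :=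
        Matrix.mul_sub _ _ _
      rw [← hCe, hsplit, Matrix.sub_mul, sub_add_cancel]
      exact hexe
    have hneg : (-((lam : ℂ) • ((p * e)ᴴ * (p * e)))).PosSemidef := by
      have heq : -((lam : ℂ) • ((p * e)ᴴ * (p * e))) = eᴴ * (x - (lam : ℂ) • p) * e := by
        rw [neg_eq_iff_add_eq_zero, add_comm]
        exact hsum
      rw [heq]
      exact hA
    have hCpos : ((lam : ℂ) • ((p * e)ᴴ * (p * e))).PosSemidef := by
      have h := Matrix.posSemidef_conjTranspose_mul_self
        (((Real.sqrt lam : ℝ) : ℂ) • (p * e))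
      have heq : (((Real.sqrt lam : ℝ) : ℂ) • (p * e))ᴴ * (((Real.sqrt lam : ℝ) : ℂ) • (p * e))
          = (lam : ℂ) • ((p * e)ᴴ * (p * e)) := by
        rw [Matrix.conjTranspose_smul, Matrix.smul_mul, Matrix.mul_smul, smul_smul]
        congr 1
        rw [RCLike.star_def, Complex.conj_ofReal, ← Complex.ofReal_mul,
          Real.mul_self_sqrt hlam.le]
      rwa [heq] at h
    have hz : (lam : ℂ) • ((p * e)ᴴ * (p * e)) = 0 := psd_neg_eq_zero hCpos hneg
    have hz' : (p * e)ᴴ * (p * e) = 0 := by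
      have hlne : (lam : ℂ) ≠ 0 := by
        simp only [ne_eq, Complex.ofReal_eq_zero]
        exact ne_of_gt hlam
      exact (smul_eq_zero.mp hz).resolve_left hlne
    exact Matrix.conjTranspose_mul_self_eq_zero.mp hz'
  have hfin : p = y := by
    have hz := hpe
    rw [hedef, Matrix.mul_sub, hpp, hpy, sub_eq_zero] at hz
    exact hz
  rw [hfin]
  exact hyS
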